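/- Let μ ∈ ℝ, σ > 0 and ρ > 0, and let q(x) = 2 φ_{μ,σ²}(x) Φ((x - μ)/√(σ² + ρ²)). Then the mean of the distribution with density q is ∫_{-∞}^{+∞} x q(x) dx = μ + 2σ²/√(2π(2σ² + ρ²)). -/

import Mathlib

open MeasureTheory Real Filter Topology Set

/-- The density of the standard normal distribution. -/
noncomputable def stdGaussianPDF (x : ℝ) : ℝ :=
  (Real.sqrt (2 * Real.pi))⁻¹ * Real.exp (-x ^ 2 / 2)

/-- The cumulative distribution function of the standard normal distribution. -/
noncomputable def stdGaussianCDF (x : ℝ) : ℝ :=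
  ∫ t in Set.Iic x, stdGaussianPDF t

/-- The density of the normal distribution with mean `μ` and variance `σ²`. -/
noncomputable def normalPDF (μ σ : ℝ) (x : ℝ) : ℝ :=
  (σ * Real.sqrt (2 * Real.pi))⁻¹ * Real.exp (-(x - μ) ^ 2 / (2 * σ ^ 2))

lemma phi_eq : stdGaussianPDF = fun x => (Real.sqrt (2 * π))⁻¹ * Real.exp (-(1/2) * x ^ 2) := by
  funext x
  rw [stdGaussianPDF, show -x^2/2 = -(1/2) * x^2 by ring]

lemma continuous_phi : Continuous stdGaussianPDF := by
  rw [phi_eq]; fun_prop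

lemma phi_nonneg (x : ℝ) : 0 ≤ stdGaussianPDF x :=
  mul_nonneg (inv_nonneg.2 (Real.sqrt_nonneg _)) (Real.exp_pos _).le

lemma phi_even (x : ℝ) : stdGaussianPDF (-x) = stdGaussianPDF x := by
  simp [stdGaussianPDF, neg_pow]

lemma integrable_phi : Integrable stdGaussianPDF := by
  rw [phi_eq]
  exact (integrable_exp_neg_mul_sq (by norm_num : (0:ℝ) < 1/2)).const_mul _

lemma integral_phi : ∫ x, stdGaussianPDF x = 1 := by
  rw [phi_eq]
  rw [integral_const_mul, integral_gaussian]
  rw [show π / (1/2) = 2 * π by ring]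
  rw [inv_mul_cancel₀ (Real.sqrt_ne_zero'.2 (by positivity))]

lemma integrable_mul_phi : Integrable (fun x => x * stdGaussianPDF x) := by
  rw [phi_eq]
  have h := (integrable_mul_exp_neg_mul_sq (by norm_num : (0:ℝ) < 1/2)).const_mul
    (Real.sqrt (2 * π))⁻¹
  refine h.congr ?_
  filter_upwards with x
  ring

lemma hasDerivAt_phi (x : ℝ) : HasDerivAt stdGaussianPDF (-x * stdGaussianPDF x) x := by
  rw [phi_eq]
  have h : HasDerivAt (fun y : ℝ => -(1/2) * y ^ 2) (-x) x := by
    simpa using ((hasDerivAt_pow 2 x).const_mul (-(1/2) : ℝ))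
  have := (h.exp).const_mul (Real.sqrt (2 * π))⁻¹
  exact this.congr_deriv (by beta_reduce; ring)

lemma cdf_nonneg (x : ℝ) : 0 ≤ stdGaussianCDF x :=
  setIntegral_nonneg measurableSet_Iic fun t _ => phi_nonneg t

lemma cdf_le_one (x : ℝ) : stdGaussianCDF x ≤ 1 := by
  rw [← integral_phi]
  exact setIntegral_le_integral integrable_phi (Filter.Eventually.of_forall phi_nonneg)

lemma hasDerivAt_cdf (x : ℝ) : HasDerivAt stdGaussianCDF (stdGaussianPDF x) x := by
  have hrepr : stdGaussianCDF = fun y =>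
      stdGaussianCDF 0 + ∫ t in (0:ℝ)..y, stdGaussianPDF t := by
    funext y
    have := intervalIntegral.integral_Iic_sub_Iic (μ := volume)
      (integrable_phi.integrableOn) (integrable_phi.integrableOn) (a := (0:ℝ)) (b := y)
    simp only [stdGaussianCDF]
    linarith
  rw [hrepr]
  exact (intervalIntegral.integral_hasDerivAt_right
    (continuous_phi.intervalIntegrable _ _)
    (continuous_phi.stronglyMeasurableAtFilter _ _)
    continuous_phi.continuousAt).const_add _

lemma continuous_cdf : Continuous stdGaussianCDF :=
  continuous_iff_continuousAt.2 fun x => (hasDerivAt_cdf x).continuousAt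

lemma cdf_neg (x : ℝ) : stdGaussianCDF (-x) = 1 - stdGaussianCDF x := by
  have h1 : stdGaussianCDF (-x) = ∫ t in Set.Ioi x, stdGaussianPDF t := by
    rw [stdGaussianCDF, show Set.Iic (-x) = Set.Iic (-x) from rfl]
    calc ∫ t in Set.Iic (-x), stdGaussianPDF t
        = ∫ t in Set.Iic (-x), stdGaussianPDF (-t) := by
          refine setIntegral_congr_fun measurableSet_Iic fun t _ => (phi_even t).symm
      _ = ∫ t in Set.Ioi (-(-x)), stdGaussianPDF t := integral_comp_neg_Iic _ _
      _ = ∫ t in Set.Ioi x, stdGaussianPDF t := by rw [neg_neg]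
  have h2 := intervalIntegral.integral_Iic_add_Ioi (μ := volume) (b := x)
    (integrable_phi.integrableOn) (integrable_phi.integrableOn)
  rw [integral_phi] at h2
  rw [h1, stdGaussianCDF]
  linarith

lemma tendsto_phi_atTop : Tendsto stdGaussianPDF atTop (𝓝 0) := by
  rw [phi_eq]
  rw [show (0:ℝ) = (Real.sqrt (2*π))⁻¹ * 0 by ring]
  refine Tendsto.const_mul _ ?_
  refine Real.tendsto_exp_atBot.comp ?_
  have : Tendsto (fun x : ℝ => x ^ 2) atTop atTop := tendsto_pow_atTop (by norm_num)
  exact tendsto_neg_atBot_iff.2 (this.const_mul_atTop (by norm_num : (0:ℝ) < 1/2)) |>.congr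
    (fun x => by ring)

lemma tendsto_phi_atBot : Tendsto stdGaussianPDF atBot (𝓝 0) := by
  have := tendsto_phi_atTop.comp tendsto_neg_atBot_atTop
  refine this.congr fun x => phi_even x


lemma cdf_norm_le (x : ℝ) : ‖stdGaussianCDF x‖ ≤ 1 := by
  rw [Real.norm_eq_abs, abs_le]
  exact ⟨by linarith [cdf_nonneg x], cdf_le_one x⟩

lemma continuous_cdf_comp (a : ℝ) : Continuous (fun y => stdGaussianCDF (a * y)) :=
  continuous_cdf.comp (continuous_const.mul continuous_id)

lemma integrable_phi_cdf (a : ℝ) :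
    Integrable (fun y => stdGaussianPDF y * stdGaussianCDF (a * y)) := by
  have h := Integrable.bdd_mul integrable_phi
    (continuous_cdf_comp a).aestronglyMeasurable (Filter.Eventually.of_forall fun y => cdf_norm_le (a * y))
  exact h.congr (by filter_upwards with y using mul_comm _ _)

lemma integrable_mul_phi_cdf (a : ℝ) :
    Integrable (fun y => y * stdGaussianPDF y * stdGaussianCDF (a * y)) := by
  have h := Integrable.bdd_mul integrable_mul_phi
    (continuous_cdf_comp a).aestronglyMeasurable (Filter.Eventually.of_forall fun y => cdf_norm_le (a * y))
  exact h.congr (by filter_upwards with y using mul_comm _ _)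

lemma phi_mul_phi (a y : ℝ) : stdGaussianPDF y * stdGaussianPDF (a * y)
    = (2 * π)⁻¹ * Real.exp (-((1 + a ^ 2) / 2) * y ^ 2) := by
  rw [stdGaussianPDF, stdGaussianPDF,
    show ((Real.sqrt (2*π))⁻¹ * rexp (-y^2/2) * ((Real.sqrt (2*π))⁻¹ * rexp (-(a*y)^2/2))
      : ℝ) = (Real.sqrt (2*π) * Real.sqrt (2*π))⁻¹ * (rexp (-y^2/2) * rexp (-(a*y)^2/2)) by
      rw [mul_inv]; ring]
  rw [Real.mul_self_sqrt (by positivity), ← Real.exp_add,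
    show -y^2/2 + -(a*y)^2/2 = -((1 + a ^ 2) / 2) * y ^ 2 by ring]

lemma integrable_phi_phi (a : ℝ) :
    Integrable (fun y => stdGaussianPDF y * stdGaussianPDF (a * y)) := by
  simp_rw [phi_mul_phi a]
  exact (integrable_exp_neg_mul_sq (by positivity : (0:ℝ) < (1 + a^2)/2)).const_mul _

lemma integral_phi_phi (a : ℝ) :
    ∫ y, stdGaussianPDF y * stdGaussianPDF (a * y)
      = (2 * π)⁻¹ * Real.sqrt (2 * π / (1 + a ^ 2)) := by
  have ha : (1:ℝ) + a ^ 2 ≠ 0 := by positivity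
  simp_rw [phi_mul_phi a]
  rw [integral_const_mul, integral_gaussian,
    show π / ((1 + a^2)/2) = 2 * π / (1 + a^2) by field_simp]

lemma integral_I0 (a : ℝ) :
    ∫ y, stdGaussianPDF y * stdGaussianCDF (a * y) = 1 / 2 := by
  have hneg : ∫ y, stdGaussianPDF y * stdGaussianCDF (a * y)
      = ∫ y, stdGaussianPDF y * (1 - stdGaussianCDF (a * y)) := by
    have h := MeasureTheory.Measure.integral_comp_mul_left
      (fun y => stdGaussianPDF y * stdGaussianCDF (a * y)) (-1)
    simp only [neg_one_mul, inv_neg, inv_one, abs_neg, abs_one, one_smul] at h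
    rw [← h]
    congr 1
    funext y
    rw [phi_even, show a * -y = -(a*y) by ring, cdf_neg]
  have hsplit : ∫ y, stdGaussianPDF y * (1 - stdGaussianCDF (a * y))
      = (∫ y, stdGaussianPDF y) - ∫ y, stdGaussianPDF y * stdGaussianCDF (a * y) := by
    rw [← integral_sub integrable_phi (integrable_phi_cdf a)]
    congr 1; funext y; ring
  rw [integral_phi] at hsplit
  rw [hsplit] at hneg
  linarith

lemma F_hasDerivAt (a y : ℝ) :
    HasDerivAt (fun t => -(stdGaussianPDF t * stdGaussianCDF (a * t)))
      (y * stdGaussianPDF y * stdGaussianCDF (a * y)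
        - a * (stdGaussianPDF y * stdGaussianPDF (a * y))) y := by
  have h1 : HasDerivAt (fun t => stdGaussianCDF (a * t)) (a * stdGaussianPDF (a * y)) y := by
    have := (hasDerivAt_cdf (a * y)).comp y ((hasDerivAt_id y).const_mul a)
    exact this.congr_deriv (by ring)
  have h2 := ((hasDerivAt_phi y).mul h1).neg
  exact h2.congr_deriv (by ring)

lemma tendsto_F (a : ℝ) {l : Filter ℝ} (hl : Tendsto stdGaussianPDF l (𝓝 0)) :
    Tendsto (fun t => -(stdGaussianPDF t * stdGaussianCDF (a * t))) l (𝓝 0) := by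
  refine squeeze_zero_norm (fun t => ?_) hl
  rw [norm_neg, Real.norm_eq_abs, abs_mul, abs_of_nonneg (phi_nonneg t),
    abs_of_nonneg (cdf_nonneg _)]
  calc stdGaussianPDF t * stdGaussianCDF (a * t)
      ≤ stdGaussianPDF t * 1 := mul_le_mul_of_nonneg_left (cdf_le_one _) (phi_nonneg t)
    _ = stdGaussianPDF t := mul_one _

lemma tendsto_F_atTop (a : ℝ) :
    Tendsto (fun t => -(stdGaussianPDF t * stdGaussianCDF (a * t))) atTop (𝓝 0) :=
  tendsto_F a tendsto_phi_atTop

lemma tendsto_F_atBot (a : ℝ) :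
    Tendsto (fun t => -(stdGaussianPDF t * stdGaussianCDF (a * t))) atBot (𝓝 0) :=
  tendsto_F a tendsto_phi_atBot

lemma integral_I1 (a : ℝ) :
    ∫ y, y * stdGaussianPDF y * stdGaussianCDF (a * y)
      = a * ((2 * π)⁻¹ * Real.sqrt (2 * π / (1 + a ^ 2))) := by
  set f' : ℝ → ℝ := fun y => y * stdGaussianPDF y * stdGaussianCDF (a * y)
    - a * (stdGaussianPDF y * stdGaussianPDF (a * y)) with hf'
  have hint : Integrable f' :=
    (integrable_mul_phi_cdf a).sub ((integrable_phi_phi a).const_mul a)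
  have hIic := integral_Iic_of_hasDerivAt_of_tendsto' (a := (0:ℝ))
    (fun x _ => F_hasDerivAt a x) hint.integrableOn (tendsto_F_atBot a)
  have hIoi := integral_Ioi_of_hasDerivAt_of_tendsto' (a := (0:ℝ))
    (fun x _ => F_hasDerivAt a x) hint.integrableOn (tendsto_F_atTop a)
  have hsum := intervalIntegral.integral_Iic_add_Ioi (μ := volume) (b := (0:ℝ))
    hint.integrableOn hint.integrableOn
  have hzero : ∫ y, f' y = 0 := by rw [← hsum, hIic, hIoi]; ring
  have := integral_sub (integrable_mul_phi_cdf a) ((integrable_phi_phi a).const_mul a)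
  rw [hf'] at hzero
  rw [this] at hzero
  rw [integral_const_mul, integral_phi_phi] at hzero
  linarith

/-- The mean of the density `q(x) = 2 φ_{μ,σ²}(x) Φ((x-μ)/√(σ²+ρ²))` is
`μ + 2σ²/√(2π(2σ²+ρ²))`. -/
theorem winner_density_mean (μ σ ρ : ℝ) (hσ : 0 < σ) (hρ : 0 < ρ) :
    ∫ x, x * (2 * normalPDF μ σ x
        * stdGaussianCDF ((x - μ) / Real.sqrt (σ ^ 2 + ρ ^ 2)))
      = μ + 2 * σ ^ 2 / Real.sqrt (2 * Real.pi * (2 * σ ^ 2 + ρ ^ 2)) := by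
  set s : ℝ := Real.sqrt (σ ^ 2 + ρ ^ 2) with hs_def
  have hs : 0 < s := Real.sqrt_pos.2 (by positivity)
  have hs2 : s ^ 2 = σ ^ 2 + ρ ^ 2 := Real.sq_sqrt (by positivity)
  set a : ℝ := σ / s with ha_def
  set T : ℝ := 2 * σ ^ 2 + ρ ^ 2 with hT_def
  have hT : 0 < T := by positivity
  set f : ℝ → ℝ := fun x => x * (2 * normalPDF μ σ x * stdGaussianCDF ((x - μ) / s))
    with hf
  have step1 : ∫ y, f (μ + σ * y) = σ⁻¹ * ∫ x, f x := by
    have h1 := MeasureTheory.Measure.integral_comp_mul_left (fun u => f (μ + u)) σ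
    have h2 : ∫ u, f (μ + u) = ∫ x, f x := integral_add_left_eq_self f μ
    rw [h2, abs_of_pos (inv_pos.2 hσ), smul_eq_mul] at h1
    exact h1
  have hfy : ∀ y, f (μ + σ * y) = σ⁻¹ *
      (2 * μ * (stdGaussianPDF y * stdGaussianCDF (a * y))
        + 2 * σ * (y * stdGaussianPDF y * stdGaussianCDF (a * y))) := by
    intro y
    have h1 : normalPDF μ σ (μ + σ * y) = σ⁻¹ * stdGaussianPDF y := by
      rw [normalPDF, stdGaussianPDF, mul_inv]
      rw [show (μ + σ * y - μ) = σ * y by ring]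
      rw [show -(σ * y) ^ 2 / (2 * σ ^ 2) = -y ^ 2 / 2 by
        rw [mul_pow]; field_simp]
      ring
    have h2 : (μ + σ * y - μ) / s = a * y := by
      rw [ha_def]; field_simp; ring
    rw [hf]
    simp only []
    rw [h1, h2]
    field_simp
  have step2 : ∫ y, f (μ + σ * y) = σ⁻¹ *
      (2 * μ * (1 / 2) + 2 * σ * (a * ((2 * π)⁻¹ * Real.sqrt (2 * π / (1 + a ^ 2))))) := by
    simp_rw [hfy]
    rw [integral_const_mul]
    rw [integral_add (((integrable_phi_cdf a)).const_mul _)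
      ((integrable_mul_phi_cdf a).const_mul _)]
    rw [integral_const_mul, integral_const_mul, integral_I0, integral_I1]
  have key : ∫ x, f x = 2 * μ * (1 / 2)
      + 2 * σ * (a * ((2 * π)⁻¹ * Real.sqrt (2 * π / (1 + a ^ 2)))) := by
    have h := step1.symm.trans step2
    exact mul_left_cancel₀ (inv_ne_zero hσ.ne') h
  rw [key]
  -- now pure arithmetic
  have h1a : 1 + a ^ 2 = T / s ^ 2 := by
    rw [ha_def, div_pow, hs2, hT_def]
    field_simp
    ring
  have h2π : Real.sqrt (2 * π) * Real.sqrt (2 * π) = 2 * π :=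
    Real.mul_self_sqrt (by positivity)
  have hTs : Real.sqrt T ≠ 0 := (Real.sqrt_pos.2 hT).ne'
  have h2πs : Real.sqrt (2 * π) ≠ 0 := by
    rw [← h2π] at *
    positivity
  have e1 : Real.sqrt (2 * π / (1 + a ^ 2)) = Real.sqrt (2 * π) * s / Real.sqrt T := by
    rw [h1a]
    rw [show 2 * π / (T / s ^ 2) = (Real.sqrt (2 * π) * s / Real.sqrt T) ^ 2 by
      rw [div_pow, mul_pow, sq_sqrt (by positivity : (0:ℝ) ≤ 2 * π), sq_sqrt hT.le]
      field_simp]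
    exact Real.sqrt_sq (by positivity)
  have e2 : Real.sqrt (2 * π * T) = Real.sqrt (2 * π) * Real.sqrt T :=
    Real.sqrt_mul (by positivity) _
  rw [e1, e2, ha_def]
  set c : ℝ := Real.sqrt (2 * π) with hc
  field_simp
  linear_combination (σ ^ 2) * h2π
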